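/- Let c, D > 0, let δ ∈ (0, c/(2D)) with κ = √(1 − 4D²δ²/c²), and let G be a finite Borel measure on [0,∞) with G([0,δ]) = 0. Then for every t ≥ 0 and every L ∈ ℕ, Σ_{l=L}^∞ (2l+1)·C_l(t,t) ≤ (1 + 1/κ)²·exp(−2Dδ²t)·Σ_{l=L}^∞ (2l+1)·C_l. (Equivalently, the L²(Ω×S²) error of the degree-L truncated approximation to the spherical hyperbolic diffusion field decays at the exponential rate exp(−Dδ²t): ‖T_H(·,t) − T_{H,L}(·,t)‖ ≤ (1/(2√π))·(1+1/κ)·exp(−Dδ²t)·(Σ_{l=L}^∞(2l+1)C_l)^{1/2}.) -/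

import Mathlib

open MeasureTheory Real Set

/-- `H̃₁(μ,t)` for the subcritical regime `0 ≤ μ < c/(2D)`. -/
noncomputable def Htilde1 (c D μ t : ℝ) : ℝ :=
  Real.exp (-(c ^ 2 * t) / (2 * D)) *
    (Real.cosh (c * t * Real.sqrt (c ^ 2 / (4 * D ^ 2) - μ ^ 2)) +
      c / (2 * D * Real.sqrt (c ^ 2 / (4 * D ^ 2) - μ ^ 2)) *
        Real.sinh (c * t * Real.sqrt (c ^ 2 / (4 * D ^ 2) - μ ^ 2)))

/-- `H̃₂(μ,t)` for the supercritical regime `μ > c/(2D)`. -/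
noncomputable def Htilde2 (c D μ t : ℝ) : ℝ :=
  Real.exp (-(c ^ 2 * t) / (2 * D)) *
    (Real.cos (c * t * Real.sqrt (μ ^ 2 - c ^ 2 / (4 * D ^ 2))) +
      c / (2 * D * Real.sqrt (μ ^ 2 - c ^ 2 / (4 * D ^ 2))) *
        Real.sin (c * t * Real.sqrt (μ ^ 2 - c ^ 2 / (4 * D ^ 2))))

/-- `H̃(μ,t)`, pieced together from `H̃₁`, the value at `μ = c/(2D)`, and `H̃₂`. -/
noncomputable def Htilde (c D μ t : ℝ) : ℝ :=
  if μ < c / (2 * D) then Htilde1 c D μ t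
  else if μ = c / (2 * D) then Real.exp (-(c ^ 2 * t) / (2 * D)) * (1 + c ^ 2 * t / (2 * D))
  else Htilde2 c D μ t

/-- Bessel function of the first kind of real order `ν`, via its power series
(with real powers; for `ν > 0` this gives `besselJ ν 0 = 0`). -/
noncomputable def besselJ (ν x : ℝ) : ℝ :=
  ∑' n : ℕ, ((-1 : ℝ) ^ n / (n.factorial * Real.Gamma ((n : ℝ) + ν + 1))) *
    (x / 2) ^ (2 * (n : ℝ) + ν)

/-- The integrand `J_{l+1/2}(μ)² / μ`, with its value at `μ = 0` defined by
continuous extension (`2/π` for `l = 0`, `0` for `l ≥ 1`). -/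
noncomputable def besselInt (l : ℕ) (μ : ℝ) : ℝ :=
  if μ = 0 then (if l = 0 then 2 / Real.pi else 0)
  else besselJ ((l : ℝ) + 1 / 2) μ ^ 2 / μ

/-- Angular power spectrum `C_l(t,t')` of the spherical hyperbolic diffusion field. -/
noncomputable def Cl (c D : ℝ) (G : MeasureTheory.Measure ℝ) (l : ℕ) (t t' : ℝ) : ℝ :=
  2 * Real.pi ^ 2 * ∫ μ in Set.Ici (0 : ℝ), besselInt l μ * Htilde c D μ t * Htilde c D μ t' ∂G


/-! ### Auxiliary development -/

noncomputable def bJt (ν x : ℝ) (n : ℕ) : ℝ :=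
  ((-1 : ℝ) ^ n / (n.factorial * Real.Gamma ((n : ℝ) + ν + 1))) * (x / 2) ^ (2 * (n : ℝ) + ν)

lemma besselJ_eq_tsum (ν x : ℝ) : besselJ ν x = ∑' n, bJt ν x n := rfl

lemma Gamma_arg_pos {ν : ℝ} (hν : -1 < ν) (n : ℕ) : 0 < (n : ℝ) + ν + 1 := by
  have : (0:ℝ) ≤ n := n.cast_nonneg
  linarith

lemma bJt_abs {ν x : ℝ} (hν : -1 < ν) (hx : 0 < x) (n : ℕ) :
    |bJt ν x n| = (x / 2) ^ (2 * (n : ℝ) + ν) / (n.factorial * Real.Gamma ((n : ℝ) + ν + 1)) := by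
  have h1 : (0:ℝ) < n.factorial * Real.Gamma ((n : ℝ) + ν + 1) := by
    have := Real.Gamma_pos_of_pos (Gamma_arg_pos hν n)
    have h3 : (0:ℝ) < n.factorial := by exact_mod_cast n.factorial_pos
    positivity
  have h2 : (0:ℝ) ≤ (x / 2) ^ (2 * (n : ℝ) + ν) := Real.rpow_nonneg (by linarith) _
  rw [bJt, abs_mul, abs_div, abs_pow, abs_neg, abs_one, one_pow, abs_of_pos h1, abs_of_nonneg h2]
  ring

lemma bJt_succ {ν x : ℝ} (hν : -1 < ν) (hx : 0 < x) (n : ℕ) :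
    bJt ν x (n + 1) = -(bJt ν x n * ((x/2)^2 / (((n:ℝ) + 1) * ((n:ℝ) + ν + 1)))) := by
  have hΓpos := Real.Gamma_pos_of_pos (Gamma_arg_pos hν n)
  have hfac : (0:ℝ) < n.factorial := by exact_mod_cast n.factorial_pos
  have hnν : (0:ℝ) < (n:ℝ) + ν + 1 := Gamma_arg_pos hν n
  have e1 : ((n+1 : ℕ):ℝ) + ν + 1 = ((n:ℝ) + ν + 1) + 1 := by push_cast; ring
  have e2 : (2 : ℝ) * ((n+1 : ℕ):ℝ) + ν = (2 * (n:ℝ) + ν) + ((2:ℕ):ℝ) := by push_cast; ring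
  have e3 : ((n+1 : ℕ).factorial : ℝ) = ((n:ℝ) + 1) * n.factorial := by
    rw [Nat.factorial_succ]; push_cast; ring
  rw [bJt, bJt, e1, e2, Real.Gamma_add_one (ne_of_gt hnν), e3,
    Real.rpow_add (by linarith : (0:ℝ) < x/2), Real.rpow_natCast, pow_succ]
  field_simp

lemma bJt_abs_summable {ν x : ℝ} (hν : -1 < ν) (hx : 0 < x) :
    Summable (fun n => |bJt ν x n|) := by
  apply summable_of_ratio_norm_eventually_le (r := 1/2) (by norm_num)
  filter_upwards [Filter.eventually_ge_atTop ⌈(x/2)^2 * 2⌉₊] with n hn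
  have hn' : (x/2)^2 * 2 ≤ (n:ℝ) := le_trans (Nat.le_ceil _) (by exact_mod_cast hn)
  have h1 : ((n:ℝ) + 1) * ((n:ℝ) + ν + 1) > 0 := by
    have := Gamma_arg_pos hν n; positivity
  rw [Real.norm_eq_abs, Real.norm_eq_abs, abs_abs, abs_abs, bJt_succ hν hx n]
  rw [abs_neg, abs_mul, abs_div]
  have hxx : |(x/2)^2| = (x/2)^2 := abs_of_nonneg (by positivity)
  rw [hxx, abs_of_pos h1]
  have hb : (x/2)^2 / (((n:ℝ) + 1) * ((n:ℝ) + ν + 1)) ≤ 1/2 := by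
    rw [div_le_iff₀ h1]
    nlinarith [Gamma_arg_pos hν n, n.cast_nonneg (α := ℝ)]
  calc |bJt ν x n| * ((x/2)^2 / (((n:ℝ) + 1) * ((n:ℝ) + ν + 1)))
      ≤ |bJt ν x n| * (1/2) := mul_le_mul_of_nonneg_left hb (abs_nonneg _)
    _ = 1/2 * |bJt ν x n| := by ring

lemma bJt_summable {ν x : ℝ} (hν : -1 < ν) (hx : 0 < x) : Summable (bJt ν x) :=
  (bJt_abs_summable hν hx).of_abs

lemma myGamma_nat_add_half (n : ℕ) :
    Real.Gamma ((n : ℝ) + 1/2) = Real.sqrt π * (2*n).factorial / (4^n * n.factorial) := by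
  induction n with
  | zero =>
    rw [show ((0:ℕ):ℝ) + 1/2 = 1/2 by norm_num, Real.Gamma_one_half_eq]; norm_num
  | succ n ih =>
    have h1 : ((n+1 : ℕ):ℝ) + 1/2 = ((n:ℝ) + 1/2) + 1 := by push_cast; ring
    have h2 : (0:ℝ) < (n:ℝ) + 1/2 := by positivity
    rw [h1, Real.Gamma_add_one (ne_of_gt h2), ih]
    have e1 : (2*(n+1)).factorial = (2*n+2) * ((2*n+1) * (2*n).factorial) := by
      rw [show 2*(n+1) = (2*n+1)+1 by ring, Nat.factorial_succ, Nat.factorial_succ]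
    have e2 : ((n+1).factorial : ℝ) = ((n:ℝ)+1) * n.factorial := by
      rw [Nat.factorial_succ]; push_cast; ring
    have hf : ((n.factorial : ℝ)) ≠ 0 := by exact_mod_cast n.factorial_pos.ne'
    have h4 : (4:ℝ)^(n+1) = 4 * 4^n := by ring
    rw [e1, h4, e2]
    push_cast
    field_simp
    ring

lemma sqrt_half_mul {x : ℝ} (hx : 0 < x) : Real.sqrt (x/2) * Real.sqrt 2 = Real.sqrt x := by
  rw [← Real.sqrt_mul (by linarith : (0:ℝ) ≤ x/2)]
  norm_num

lemma rpow_half_split {x : ℝ} (hx : 0 < x) (n : ℕ) :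
    (x/2) ^ (2 * (n:ℝ) + 1/2) = x^(2*n) / 4^n * (Real.sqrt x / Real.sqrt 2) := by
  have h2 : (0:ℝ) < x/2 := by linarith
  rw [show 2 * (n:ℝ) + 1/2 = ((2*n : ℕ):ℝ) + 1/2 by push_cast; ring,
    Real.rpow_add h2, Real.rpow_natCast, ← Real.sqrt_eq_rpow]
  have : Real.sqrt (x/2) = Real.sqrt x / Real.sqrt 2 := by
    rw [eq_div_iff (by positivity : Real.sqrt 2 ≠ 0)]; exact sqrt_half_mul hx
  rw [this, div_pow, show ((2:ℝ))^(2*n) = 4^n by rw [pow_mul]; norm_num]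

lemma rpow_neg_half_split {x : ℝ} (hx : 0 < x) (n : ℕ) :
    (x/2) ^ (2 * (n:ℝ) + -(1/2)) = x^(2*n) / 4^n * (Real.sqrt 2 / Real.sqrt x) := by
  have h2 : (0:ℝ) < x/2 := by linarith
  rw [show 2 * (n:ℝ) + -(1/2) = ((2*n : ℕ):ℝ) + -(1/2) by push_cast; ring,
    Real.rpow_add h2, Real.rpow_natCast, Real.rpow_neg (le_of_lt h2), ← Real.sqrt_eq_rpow]
  have : Real.sqrt (x/2) = Real.sqrt x / Real.sqrt 2 := by
    rw [eq_div_iff (by positivity : Real.sqrt 2 ≠ 0)]; exact sqrt_half_mul hx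
  rw [this, div_pow, show ((2:ℝ))^(2*n) = 4^n by rw [pow_mul]; norm_num]
  rw [inv_div]

lemma bJt_neg_half {x : ℝ} (hx : 0 < x) (n : ℕ) :
    bJt (-(1/2)) x n = Real.sqrt 2 / (Real.sqrt π * Real.sqrt x) *
      ((-1)^n * x^(2*n) / (2*n).factorial) := by
  have hΓ : ((n:ℝ)) + -(1/2) + 1 = (n:ℝ) + 1/2 := by ring
  rw [bJt, hΓ, myGamma_nat_add_half, rpow_neg_half_split hx]
  have hπ : Real.sqrt π > 0 := Real.sqrt_pos.mpr Real.pi_pos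
  have hsx : Real.sqrt x > 0 := Real.sqrt_pos.mpr hx
  have hf : ((n.factorial : ℝ)) ≠ 0 := by exact_mod_cast n.factorial_pos.ne'
  have hf2 : (((2*n).factorial : ℝ)) ≠ 0 := by exact_mod_cast (2*n).factorial_pos.ne'
  have h4 : ((4:ℝ)^n) ≠ 0 := by positivity
  field_simp

lemma bJt_half {x : ℝ} (hx : 0 < x) (n : ℕ) :
    bJt (1/2) x n = Real.sqrt 2 / (Real.sqrt π * Real.sqrt x) *
      ((-1)^n * x^(2*n+1) / (2*n+1).factorial) := by
  have hΓ : ((n:ℝ)) + 1/2 + 1 = ((n+1 : ℕ):ℝ) + 1/2 := by push_cast; ring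
  rw [bJt, hΓ, myGamma_nat_add_half, rpow_half_split hx]
  have hπ : Real.sqrt π > 0 := Real.sqrt_pos.mpr Real.pi_pos
  have hsx : Real.sqrt x > 0 := Real.sqrt_pos.mpr hx
  have hf : ((n.factorial : ℝ)) ≠ 0 := by exact_mod_cast n.factorial_pos.ne'
  have hf1 : (((n+1).factorial : ℝ)) ≠ 0 := by exact_mod_cast (n+1).factorial_pos.ne'
  have hf2 : (((2*(n+1)).factorial : ℝ)) ≠ 0 := by exact_mod_cast (2*(n+1)).factorial_pos.ne'
  have h4 : ((4:ℝ)^(n+1)) ≠ 0 := by positivity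
  have e1 : ((2*(n+1)).factorial : ℝ) = (2*(n:ℝ)+2) * (2*n+1).factorial := by
    rw [show 2*(n+1) = (2*n+1)+1 by ring, Nat.factorial_succ]; push_cast; ring
  have e2 : ((n+1).factorial : ℝ) = ((n:ℝ)+1) * n.factorial := by
    rw [Nat.factorial_succ]; push_cast; ring
  have e3 : (4:ℝ)^(n+1) = 4 * 4^n := by ring
  have e4 : (x:ℝ)^(2*n+1) = x^(2*n) * x := by ring
  have hf3 : (((2*n+1).factorial : ℝ)) ≠ 0 := by exact_mod_cast (2*n+1).factorial_pos.ne'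
  have hsxx : Real.sqrt x * Real.sqrt x = x := Real.mul_self_sqrt (le_of_lt hx)
  rw [e1, e2, e3, e4]
  field_simp
  ring_nf
  rw [Real.sq_sqrt (le_of_lt hx), Real.sq_sqrt (by norm_num : (0:ℝ) ≤ 2)]
  ring

lemma besselJ_neg_half {x : ℝ} (hx : 0 < x) :
    besselJ (-(1/2)) x = Real.sqrt 2 / (Real.sqrt π * Real.sqrt x) * Real.cos x := by
  rw [besselJ_eq_tsum, tsum_congr (bJt_neg_half hx), tsum_mul_left, Real.cos_eq_tsum]

lemma besselJ_half {x : ℝ} (hx : 0 < x) :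
    besselJ (1/2) x = Real.sqrt 2 / (Real.sqrt π * Real.sqrt x) * Real.sin x := by
  rw [besselJ_eq_tsum, tsum_congr (bJt_half hx), tsum_mul_left, Real.sin_eq_tsum]

lemma besselJ_recurrence {ν x : ℝ} (hν : (1:ℝ)/2 ≤ ν) (hx : 0 < x) :
    besselJ (ν+1) x = (2*ν/x) * besselJ ν x - besselJ (ν-1) x := by
  have hν0 : (0:ℝ) < ν := by linarith
  have hν1 : (-1:ℝ) < ν := by linarith
  have hν1' : (-1:ℝ) < ν - 1 := by linarith
  have hν1'' : (-1:ℝ) < ν + 1 := by linarith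
  have hs := bJt_summable hν1 hx
  have hs1 := bJt_summable hν1' hx
  have hs2 := bJt_summable hν1'' hx
  set U : ℕ → ℝ := fun n => (2*ν/x) * bJt ν x n - bJt (ν-1) x n with hU
  have hUsum : Summable U := (hs.mul_left _).sub hs1
  have hU0 : U 0 = 0 := by
    have hΓν : Real.Gamma (ν + 1) = ν * Real.Gamma ν := Real.Gamma_add_one (ne_of_gt hν0)
    have e1 : ((0:ℕ):ℝ) + ν + 1 = ν + 1 := by norm_num
    have e2 : ((0:ℕ):ℝ) + (ν-1) + 1 = ν := by norm_num
    have e3 : (2:ℝ) * ((0:ℕ):ℝ) + ν = (ν - 1) + 1 := by norm_num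
    have e4 : (2:ℝ) * ((0:ℕ):ℝ) + (ν-1) = ν - 1 := by norm_num
    have hrp : (x/2) ^ ((ν-1) + 1) = (x/2)^(ν-1) * (x/2) := by
      rw [Real.rpow_add (by linarith : (0:ℝ) < x/2), Real.rpow_one]
    have hΓpos : 0 < Real.Gamma ν := Real.Gamma_pos_of_pos hν0
    simp only [hU, bJt, e1, e2, e3, e4, hrp, hΓν]
    simp only [pow_zero, Nat.factorial_zero, Nat.cast_one, one_mul]
    field_simp
    ring
  have hUsucc : ∀ n : ℕ, U (n+1) = bJt (ν+1) x n := by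
    intro n
    have hargpos : (0:ℝ) < (n:ℝ) + ν + 1 := Gamma_arg_pos hν1 n
    have hΓpos : 0 < Real.Gamma ((n:ℝ) + ν + 1) := Real.Gamma_pos_of_pos hargpos
    have hΓ2 : Real.Gamma (((n+1):ℕ) + ν + 1) = ((n:ℝ)+ν+1) * Real.Gamma ((n:ℝ)+ν+1) := by
      rw [show (((n+1):ℕ):ℝ) + ν + 1 = ((n:ℝ) + ν + 1) + 1 by push_cast; ring,
        Real.Gamma_add_one (ne_of_gt hargpos)]
    have hΓ3 : Real.Gamma (((n+1):ℕ) + (ν-1) + 1) = Real.Gamma ((n:ℝ)+ν+1) := by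
      congr 1; push_cast; ring
    have hΓ4 : Real.Gamma ((n:ℝ) + (ν+1) + 1) = ((n:ℝ)+ν+1) * Real.Gamma ((n:ℝ)+ν+1) := by
      rw [show ((n:ℝ)) + (ν+1) + 1 = ((n:ℝ) + ν + 1) + 1 by ring,
        Real.Gamma_add_one (ne_of_gt hargpos)]
    have hfac : (((n+1).factorial : ℝ)) = ((n:ℝ)+1) * n.factorial := by
      rw [Nat.factorial_succ]; push_cast; ring
    have hrp1 : (x/2) ^ (2 * (((n+1):ℕ):ℝ) + ν) = (x/2)^(2*(n:ℝ) + (ν+1)) * (x/2) := by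
      rw [show 2 * (((n+1):ℕ):ℝ) + ν = (2*(n:ℝ) + (ν+1)) + 1 by push_cast; ring,
        Real.rpow_add (by linarith : (0:ℝ) < x/2), Real.rpow_one]
    have hrp2 : (x/2) ^ (2 * (((n+1):ℕ):ℝ) + (ν-1)) = (x/2)^(2*(n:ℝ) + (ν+1)) := by
      congr 1; push_cast; ring
    have hfacpos : (0:ℝ) < n.factorial := by exact_mod_cast n.factorial_pos
    simp only [hU, bJt, hΓ2, hΓ3, hΓ4, hfac, hrp1, hrp2, pow_succ]
    field_simp
    ring
  have h1 : ∑' n, U n = (2*ν/x) * besselJ ν x - besselJ (ν-1) x := by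
    rw [hU, Summable.tsum_sub (hs.mul_left _) hs1, tsum_mul_left, besselJ_eq_tsum, besselJ_eq_tsum]
  have h2 : ∑' n, U n = besselJ (ν+1) x := by
    rw [Summable.tsum_eq_zero_add hUsum, hU0, besselJ_eq_tsum]
    simp only [hUsucc]
    simp
  rw [← h2, h1]

lemma besselJ_bound {δ : ℝ} (hδ : 0 < δ) (l : ℕ) :
    ∃ C : ℝ, 0 ≤ C ∧ ∀ x, δ ≤ x →
      |besselJ ((l:ℝ) - 1/2) x| ≤ C / Real.sqrt x ∧
      |besselJ ((l:ℝ) + 1/2) x| ≤ C / Real.sqrt x := by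
  induction l with
  | zero =>
    refine ⟨Real.sqrt 2 / Real.sqrt π, by positivity, fun x hx => ?_⟩
    have hx0 : 0 < x := lt_of_lt_of_le hδ hx
    have hsx : 0 < Real.sqrt x := Real.sqrt_pos.mpr hx0
    have hπ : 0 < Real.sqrt π := Real.sqrt_pos.mpr Real.pi_pos
    have key : ∀ w : ℝ, |w| ≤ 1 →
        |Real.sqrt 2 / (Real.sqrt π * Real.sqrt x) * w| ≤ Real.sqrt 2 / Real.sqrt π / Real.sqrt x := by
      intro w hw
      rw [abs_mul, abs_of_nonneg (by positivity : (0:ℝ) ≤ Real.sqrt 2 / (Real.sqrt π * Real.sqrt x))]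
      calc Real.sqrt 2 / (Real.sqrt π * Real.sqrt x) * |w|
          ≤ Real.sqrt 2 / (Real.sqrt π * Real.sqrt x) * 1 :=
            mul_le_mul_of_nonneg_left hw (by positivity)
        _ = Real.sqrt 2 / Real.sqrt π / Real.sqrt x := by rw [mul_one, div_div]
    constructor
    · rw [show ((0:ℕ):ℝ) - 1/2 = -(1/2) by norm_num, besselJ_neg_half hx0]
      exact key _ (Real.abs_cos_le_one x)
    · rw [show ((0:ℕ):ℝ) + 1/2 = 1/2 by norm_num, besselJ_half hx0]
      exact key _ (Real.abs_sin_le_one x)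
  | succ l ih =>
    obtain ⟨C, hC0, hC⟩ := ih
    refine ⟨(2*(l:ℝ)+1)/δ * C + C, by positivity, fun x hx => ?_⟩
    have hx0 : 0 < x := lt_of_lt_of_le hδ hx
    have hsx : 0 < Real.sqrt x := Real.sqrt_pos.mpr hx0
    obtain ⟨h1, h2⟩ := hC x hx
    have e1 : ((l+1:ℕ):ℝ) - 1/2 = (l:ℝ) + 1/2 := by push_cast; ring
    have e2 : ((l+1:ℕ):ℝ) + 1/2 = ((l:ℝ) + 1/2) + 1 := by push_cast; ring
    constructor
    · rw [e1]
      calc |besselJ ((l:ℝ) + 1/2) x| ≤ C / Real.sqrt x := h2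
        _ ≤ ((2*(l:ℝ)+1)/δ * C + C) / Real.sqrt x := by
            gcongr
            have : 0 ≤ (2*(l:ℝ)+1)/δ * C := by positivity
            linarith
    · rw [e2, besselJ_recurrence (by linarith [Nat.cast_nonneg (α := ℝ) l] : (1:ℝ)/2 ≤ (l:ℝ)+1/2) hx0]
      have e3 : ((l:ℝ) + 1/2) - 1 = (l:ℝ) - 1/2 := by ring
      rw [e3]
      have hcoef : 0 ≤ 2*((l:ℝ)+1/2)/x := by positivity
      have hcoef2 : 2*((l:ℝ)+1/2)/x ≤ (2*(l:ℝ)+1)/δ := by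
        rw [show 2*((l:ℝ)+1/2) = 2*(l:ℝ)+1 by ring]
        apply div_le_div_of_nonneg_left (by positivity) hδ hx
      calc |2*((l:ℝ)+1/2)/x * besselJ ((l:ℝ)+1/2) x - besselJ ((l:ℝ)-1/2) x|
          ≤ |2*((l:ℝ)+1/2)/x * besselJ ((l:ℝ)+1/2) x| + |besselJ ((l:ℝ)-1/2) x| := abs_sub _ _
        _ = 2*((l:ℝ)+1/2)/x * |besselJ ((l:ℝ)+1/2) x| + |besselJ ((l:ℝ)-1/2) x| := by
            rw [abs_mul, abs_of_nonneg hcoef]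
        _ ≤ (2*(l:ℝ)+1)/δ * (C / Real.sqrt x) + C / Real.sqrt x := by
            apply add_le_add _ h1
            exact mul_le_mul hcoef2 h2 (abs_nonneg _) (by positivity)
        _ = ((2*(l:ℝ)+1)/δ * C + C) / Real.sqrt x := by ring

lemma besselJ_continuousAt {ν x : ℝ} (hν : -1 < ν) (hx : 0 < x) :
    ContinuousAt (besselJ ν) x := by
  set a := x/2 with ha
  set b := x+1 with hb
  have ha0 : 0 < a := by positivity
  have hb0 : 0 < b := by positivity
  have hcont : ContinuousOn (besselJ ν) (Icc a b) := by
    have : ContinuousOn (fun y => ∑' n, bJt ν y n) (Icc a b) := by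
      apply continuousOn_tsum (u := fun n => |bJt ν a n| + |bJt ν b n|)
      · intro n
        apply ContinuousOn.mul continuousOn_const
        apply ContinuousOn.rpow_const (continuousOn_id.div_const 2)
        intro y hy
        left
        simp only [id_eq]
        exact div_ne_zero (ne_of_gt (lt_of_lt_of_le ha0 hy.1)) two_ne_zero
      · exact (bJt_abs_summable hν ha0).add (bJt_abs_summable hν hb0)
      · intro n y hy
        have hy0 : 0 < y := lt_of_lt_of_le ha0 hy.1
        have h1 : ‖bJt ν y n‖ = |bJt ν y n| := rfl
        rw [h1, bJt_abs hν hy0, bJt_abs hν ha0, bJt_abs hν hb0]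
        have hd : 0 < (n.factorial : ℝ) * Real.Gamma ((n : ℝ) + ν + 1) := by
          have h2 := Real.Gamma_pos_of_pos (Gamma_arg_pos hν n)
          have h3 : (0:ℝ) < n.factorial := by exact_mod_cast n.factorial_pos
          positivity
        rcases le_or_gt 0 (2 * (n:ℝ) + ν) with he | he
        · have : (y/2) ^ (2 * (n:ℝ) + ν) ≤ (b/2) ^ (2 * (n:ℝ) + ν) :=
            Real.rpow_le_rpow (by positivity) (by linarith [hy.2]) he
          have hbb : (b/2) ^ (2 * (n:ℝ) + ν) / ((n.factorial : ℝ) * Real.Gamma ((n : ℝ) + ν + 1))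
              ≤ (a/2) ^ (2 * (n:ℝ) + ν) / ((n.factorial : ℝ) * Real.Gamma ((n : ℝ) + ν + 1))
              + (b/2) ^ (2 * (n:ℝ) + ν) / ((n.factorial : ℝ) * Real.Gamma ((n : ℝ) + ν + 1)) := by
            have : 0 ≤ (a/2) ^ (2 * (n:ℝ) + ν) / ((n.factorial : ℝ) * Real.Gamma ((n : ℝ) + ν + 1)) :=
              div_nonneg (Real.rpow_nonneg (by positivity) _) (le_of_lt hd)
            linarith
          exact le_trans (by gcongr) hbb
        · have : (y/2) ^ (2 * (n:ℝ) + ν) ≤ (a/2) ^ (2 * (n:ℝ) + ν) :=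
            Real.rpow_le_rpow_of_nonpos (by positivity) (by linarith [hy.1]) (le_of_lt he)
          have hbb : 0 ≤ (b/2) ^ (2 * (n:ℝ) + ν) / ((n.factorial : ℝ) * Real.Gamma ((n : ℝ) + ν + 1)) :=
            div_nonneg (Real.rpow_nonneg (by positivity) _) (le_of_lt hd)
          have h5 : (y/2) ^ (2 * (n:ℝ) + ν) / ((n.factorial : ℝ) * Real.Gamma ((n : ℝ) + ν + 1))
              ≤ (a/2) ^ (2 * (n:ℝ) + ν) / ((n.factorial : ℝ) * Real.Gamma ((n : ℝ) + ν + 1)) := by gcongr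
          linarith
    exact this
  have hmem : Icc a b ∈ nhds x := Icc_mem_nhds (by rw [ha]; linarith) (by rw [hb]; linarith)
  exact ContinuousOn.continuousAt hcont hmem


lemma Htilde_zero (c D μ : ℝ) : Htilde c D μ 0 = 1 := by
  unfold Htilde Htilde1 Htilde2
  split_ifs <;> simp

lemma Htilde_measurable (c D t : ℝ) : Measurable (fun μ => Htilde c D μ t) := by
  have csq1 : Continuous (fun μ : ℝ => Real.sqrt (c^2/(4*D^2) - μ^2)) :=
    Real.continuous_sqrt.comp (continuous_const.sub (continuous_pow 2))
  have csq2 : Continuous (fun μ : ℝ => Real.sqrt (μ^2 - c^2/(4*D^2))) :=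
    Real.continuous_sqrt.comp ((continuous_pow 2).sub continuous_const)
  have m1 : Measurable (fun μ : ℝ => Htilde1 c D μ t) := by
    unfold Htilde1
    have c1 : Continuous fun μ : ℝ => Real.cosh (c * t * Real.sqrt (c^2/(4*D^2) - μ^2)) :=
      Real.continuous_cosh.comp (continuous_const.mul csq1)
    have c2 : Continuous fun μ : ℝ => Real.sinh (c * t * Real.sqrt (c^2/(4*D^2) - μ^2)) :=
      Real.continuous_sinh.comp (continuous_const.mul csq1)
    have d1 : Measurable fun μ : ℝ => c / (2*D*Real.sqrt (c^2/(4*D^2) - μ^2)) :=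
      measurable_const.div (continuous_const.mul csq1).measurable
    exact measurable_const.mul (c1.measurable.add (d1.mul c2.measurable))
  have m2 : Measurable (fun μ : ℝ => Htilde2 c D μ t) := by
    unfold Htilde2
    have c1 : Continuous fun μ : ℝ => Real.cos (c * t * Real.sqrt (μ^2 - c^2/(4*D^2))) :=
      Real.continuous_cos.comp (continuous_const.mul csq2)
    have c2 : Continuous fun μ : ℝ => Real.sin (c * t * Real.sqrt (μ^2 - c^2/(4*D^2))) :=
      Real.continuous_sin.comp (continuous_const.mul csq2)
    have d1 : Measurable fun μ : ℝ => c / (2*D*Real.sqrt (μ^2 - c^2/(4*D^2))) :=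
      measurable_const.div (continuous_const.mul csq2).measurable
    exact measurable_const.mul (c1.measurable.add (d1.mul c2.measurable))
  unfold Htilde
  apply Measurable.ite (measurableSet_lt measurable_id measurable_const) m1
  exact Measurable.ite (measurableSet_eq_fun measurable_id measurable_const)
    measurable_const m2

/-- if `f 0 ≥ 0` and the derivative is nonneg on `[0,∞)` then `f ≥ 0` there -/
lemma nonneg_of_deriv {f f' : ℝ → ℝ} (hf : ∀ t, HasDerivAt f (f' t) t)
    (h0 : 0 ≤ f 0) (hd : ∀ t, 0 ≤ t → 0 ≤ f' t) : ∀ t, 0 ≤ t → 0 ≤ f t := by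
  intro t ht
  have hmono : MonotoneOn f (Ici (0:ℝ)) := by
    apply monotoneOn_of_deriv_nonneg (convex_Ici 0)
    · exact (continuous_iff_continuousAt.mpr (fun x => (hf x).continuousAt)).continuousOn
    · intro x hx
      exact ((hf x).differentiableAt).differentiableWithinAt
    · intro x hx
      rw [(hf x).deriv]
      exact hd x (le_of_lt (by simpa using hx))
  have := hmono (self_mem_Ici) (mem_Ici.mpr ht) ht
  linarith

/-- The core scalar inequality: `cosh(at) + r·sinh(at) ≤ M·exp(At)` -/
lemma cosh_sinh_le {a r s' A M : ℝ} (ha : 0 ≤ a) (hr : 0 ≤ r) (hra : r * a ≤ s')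
    (has : a ≤ s') (haA : a ≤ A) (hA2 : s' ≤ 2 * A) (hM : 2 ≤ M) (hs' : 0 ≤ s') :
    ∀ t, 0 ≤ t → Real.cosh (a*t) + r * Real.sinh (a*t) ≤ M * Real.exp (A*t) := by
  have key := nonneg_of_deriv (f := fun t => M * Real.exp (A*t) - Real.cosh (a*t) - r * Real.sinh (a*t))
    (f' := fun t => M * (Real.exp (A*t) * A) - Real.sinh (a*t) * a - r * (Real.cosh (a*t) * a))
    (fun t => by
      have h1 : HasDerivAt (fun t : ℝ => A * t) A t := by
        simpa using (hasDerivAt_id t).const_mul A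
      have h2 : HasDerivAt (fun t : ℝ => a * t) a t := by
        simpa using (hasDerivAt_id t).const_mul a
      exact (((h1.exp).const_mul M).sub (h2.cosh)).sub ((h2.sinh).const_mul r))
    (by norm_num; linarith)
    (fun t ht => by
      have hat : 0 ≤ a * t := mul_nonneg ha ht
      have hsh : 0 ≤ Real.sinh (a*t) := by
        rw [show (0:ℝ) = Real.sinh 0 by simp]; exact Real.sinh_le_sinh.mpr hat
      have hch : 0 < Real.cosh (a*t) := Real.cosh_pos _
      have h3 : Real.sinh (a*t) * a + r * (Real.cosh (a*t) * a) ≤ s' * Real.exp (a*t) := by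
        have e1 : Real.exp (a*t) = Real.cosh (a*t) + Real.sinh (a*t) := by
          rw [Real.cosh_eq, Real.sinh_eq]; ring
        have b1 : Real.sinh (a*t) * a ≤ s' * Real.sinh (a*t) := by nlinarith
        have b2 : r * (Real.cosh (a*t) * a) ≤ s' * Real.cosh (a*t) := by nlinarith
        rw [e1]; nlinarith
      have h4 : s' * Real.exp (a*t) ≤ M * (Real.exp (A*t) * A) := by
        have hexp : Real.exp (a*t) ≤ Real.exp (A*t) :=
          Real.exp_le_exp.mpr (by nlinarith)
        have hA0 : 0 ≤ A := le_trans ha haA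
        have c1 : s' * Real.exp (a*t) ≤ s' * Real.exp (A*t) :=
          mul_le_mul_of_nonneg_left hexp hs'
        have c2 : s' * Real.exp (A*t) ≤ 2*A * Real.exp (A*t) :=
          mul_le_mul_of_nonneg_right hA2 (le_of_lt (Real.exp_pos _))
        have c3 : 2*A * Real.exp (A*t) ≤ M * A * Real.exp (A*t) := by
          apply mul_le_mul_of_nonneg_right _ (le_of_lt (Real.exp_pos _))
          nlinarith
        nlinarith
      linarith)
  intro t ht
  have := key t ht
  linarith

lemma one_add_le {s' A M : ℝ} (hs' : 0 ≤ s') (hA : 0 ≤ A) (hA2 : s' ≤ 2*A) (hM : 2 ≤ M) :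
    ∀ t, 0 ≤ t → 1 + s' * t ≤ M * Real.exp (A*t) := by
  have key := nonneg_of_deriv (f := fun t => M * Real.exp (A*t) - (1 + s' * t))
    (f' := fun t => M * (Real.exp (A*t) * A) - s')
    (fun t => by
      have h1 : HasDerivAt (fun t : ℝ => A * t) A t := by
        simpa using (hasDerivAt_id t).const_mul A
      have h2 : HasDerivAt (fun t : ℝ => 1 + s' * t) s' t := by
        simpa using ((hasDerivAt_id t).const_mul s').const_add 1
      exact ((h1.exp).const_mul M).sub h2)
    (by norm_num; linarith)
    (fun t ht => by
      have h1 : (1:ℝ) ≤ Real.exp (A*t) := by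
        rw [show (1:ℝ) = Real.exp 0 by simp]
        exact Real.exp_le_exp.mpr (by positivity)
      have h2 : 2 ≤ M * Real.exp (A*t) := by nlinarith
      nlinarith [mul_le_mul_of_nonneg_right h2 hA])
  intro t ht
  have := key t ht
  linarith

section Main
variable {c D δ κ : ℝ}

lemma kappa_facts (hc : 0 < c) (hD : 0 < D) (hδ0 : 0 < δ) (hδ : δ < c / (2 * D))
    (hκ : κ = Real.sqrt (1 - 4 * D ^ 2 * δ ^ 2 / c ^ 2)) :
    0 < κ ∧ κ ≤ 1 ∧ κ^2 = 1 - 4 * D ^ 2 * δ ^ 2 / c ^ 2 ∧ 4 * D^2 * δ^2 < c^2 := by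
  have h2D : 2 * D * δ < c := by
    rw [lt_div_iff₀ (by positivity : (0:ℝ) < 2*D)] at hδ
    linarith
  have h4 : 4 * D^2 * δ^2 < c^2 := by
    have h5 := mul_lt_mul'' h2D h2D (by positivity) (by positivity)
    nlinarith
  have harg : 0 < 1 - 4 * D ^ 2 * δ ^ 2 / c ^ 2 := by
    rw [sub_pos, div_lt_one (by positivity)]; exact h4
  have harg1 : 1 - 4 * D ^ 2 * δ ^ 2 / c ^ 2 ≤ 1 := by
    have : 0 ≤ 4 * D ^ 2 * δ ^ 2 / c ^ 2 := by positivity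
    linarith
  refine ⟨hκ ▸ Real.sqrt_pos.mpr harg, hκ ▸ ?_, hκ ▸ Real.sq_sqrt (le_of_lt harg), h4⟩
  calc Real.sqrt (1 - 4 * D ^ 2 * δ ^ 2 / c ^ 2) ≤ Real.sqrt 1 := Real.sqrt_le_sqrt harg1
    _ = 1 := Real.sqrt_one

set_option maxHeartbeats 1000000 in
lemma Htilde_abs_le (hc : 0 < c) (hD : 0 < D) (hδ0 : 0 < δ) (hδ : δ < c / (2 * D))
    (hκ : κ = Real.sqrt (1 - 4 * D ^ 2 * δ ^ 2 / c ^ 2)) {μ t : ℝ} (ht : 0 ≤ t) (hμ : δ < μ) :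
    |Htilde c D μ t| ≤ (1 + 1/κ) * Real.exp (-(D * δ^2 * t)) := by
  obtain ⟨hκ0, hκ1, hκsq, h4⟩ := kappa_facts hc hD hδ0 hδ hκ
  set M := 1 + 1/κ with hM
  have hM2 : 2 ≤ M := by
    have : 1 ≤ 1/κ := by rw [le_div_iff₀ hκ0]; linarith
    rw [hM]; linarith
  set s' := c^2/(2*D) with hs'
  set A := c^2/(2*D) - D*δ^2 with hA
  have hs'pos : 0 < s' := by positivity
  have hDδ : D * δ^2 < c^2/(4*D) := by
    rw [lt_div_iff₀ (by positivity)]; nlinarith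
  have hApos : 0 < A := by
    rw [hA]
    have : c^2/(4*D) ≤ c^2/(2*D) := by
      apply div_le_div_of_nonneg_left (by positivity) (by positivity) (by linarith)
    linarith
  have hs2A : s' ≤ 2*A := by
    rw [hs', hA]
    have : 2 * D * δ^2 ≤ c^2/(2*D) := by
      rw [le_div_iff₀ (by positivity)]; nlinarith
    linarith
  have hAs : A ≤ s' := by rw [hA, hs']; nlinarith
  have hexpid : Real.exp (-(c ^ 2 * t) / (2 * D)) * (M * Real.exp (A * t))
      = M * Real.exp (-(D * δ^2 * t)) := by
    rw [mul_comm (Real.exp _) _, mul_assoc, ← Real.exp_add]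
    congr 2
    rw [hA]; ring
  have hE : 0 < Real.exp (-(c ^ 2 * t) / (2 * D)) := Real.exp_pos _
  unfold Htilde
  split_ifs with h1 h2
  · -- subcritical
    set x := Real.sqrt (c ^ 2 / (4 * D ^ 2) - μ ^ 2) with hx
    have hμpos : 0 < μ := lt_trans hδ0 hμ
    have harg : 0 < c ^ 2 / (4 * D ^ 2) - μ ^ 2 := by
      have : μ^2 < (c/(2*D))^2 := by nlinarith
      have e : (c/(2*D))^2 = c^2/(4*D^2) := by field_simp; ring
      linarith [e ▸ this]
    have hxpos : 0 < x := Real.sqrt_pos.mpr harg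
    have hxle : c * x ≤ A := by
      have hXval : Real.sqrt (c ^ 2 / (4 * D ^ 2) - δ ^ 2) = c/(2*D) * κ := by
        rw [show c ^ 2 / (4 * D ^ 2) - δ ^ 2 = (c/(2*D))^2 * (1 - 4 * D ^ 2 * δ ^ 2 / c ^ 2) by
          field_simp; ring, Real.sqrt_mul (by positivity), Real.sqrt_sq (by positivity), hκ]
      have hxX : x ≤ c/(2*D) * κ := by
        rw [← hXval, hx]
        exact Real.sqrt_le_sqrt (sub_le_sub_left (pow_le_pow_left₀ (le_of_lt hδ0) (le_of_lt hμ) 2) _)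
      have hcX : c * (c/(2*D) * κ) ≤ A := by
        rw [hA]
        have hkb : κ ≤ 1 - 2 * D^2 * δ^2 / c^2 := by
          set q := D^2 * δ^2 / c^2 with hqdef
          have hqpos : 0 < q := by rw [hqdef]; positivity
          have hq2 : κ^2 = 1 - 4*q := by rw [hκsq, hqdef]; ring
          have hq12 : 2*q < 1/2 := by
            rw [hqdef, show 2 * (D^2 * δ^2 / c^2) = 2*D^2*δ^2/c^2 by ring,
              div_lt_iff₀ (by positivity : (0:ℝ) < c^2)]
            nlinarith
          have h1q : (0:ℝ) ≤ 1 - 2*q := by linarith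
          have hsq : κ^2 ≤ (1 - 2*q)^2 := by nlinarith [sq_nonneg q]
          have h6 := Real.sqrt_le_sqrt hsq
          rw [Real.sqrt_sq (le_of_lt hκ0), Real.sqrt_sq h1q] at h6
          rw [show 1 - 2 * D^2 * δ^2 / c^2 = 1 - 2*q by rw [hqdef]; ring]
          exact h6
        have : c * (c/(2*D) * κ) ≤ c * (c/(2*D)) * (1 - 2 * D^2 * δ^2 / c^2) := by
          have hcc : 0 < c * (c/(2*D)) := by positivity
          calc c * (c/(2*D) * κ) = c * (c/(2*D)) * κ := by ring
            _ ≤ c * (c/(2*D)) * (1 - 2 * D^2 * δ^2 / c^2) :=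
              mul_le_mul_of_nonneg_left hkb (le_of_lt hcc)
        calc c * (c/(2*D) * κ) ≤ c * (c/(2*D)) * (1 - 2 * D^2 * δ^2 / c^2) := this
          _ = c^2/(2*D) - D * δ^2 := by field_simp
      calc c * x ≤ c * (c/(2*D) * κ) := mul_le_mul_of_nonneg_left hxX (le_of_lt hc)
        _ ≤ A := hcX
    have hr : (0:ℝ) ≤ c / (2 * D * x) := by positivity
    have hra : c / (2 * D * x) * (c * x) ≤ s' := by
      rw [hs']
      have : c / (2 * D * x) * (c * x) = c^2/(2*D) := by field_simp
      linarith [this.le]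
    have key := cosh_sinh_le (a := c*x) (r := c / (2 * D * x)) (s' := s') (A := A) (M := M)
      (by positivity) hr hra (le_trans hxle hAs) hxle hs2A hM2 (le_of_lt hs'pos) t ht
    have hinner_nonneg : 0 ≤ Real.cosh (c * t * x) + c / (2 * D * x) * Real.sinh (c * t * x) := by
      have h5 : 0 ≤ c * t * x := by positivity
      have hsh : 0 ≤ Real.sinh (c * t * x) := by
        rw [show (0:ℝ) = Real.sinh 0 by simp]; exact Real.sinh_le_sinh.mpr h5
      nlinarith [Real.cosh_pos (c * t * x)]
    simp only [Htilde1]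
    rw [abs_mul, abs_of_pos hE, abs_of_nonneg hinner_nonneg]
    rw [← hexpid]
    apply mul_le_mul_of_nonneg_left _ (le_of_lt hE)
    have e : c * t * x = (c * x) * t := by ring
    rw [e]
    exact key
  · -- critical
    have hval : 0 ≤ 1 + c ^ 2 * t / (2 * D) := by positivity
    rw [abs_mul, abs_of_pos hE, abs_of_nonneg hval, ← hexpid]
    apply mul_le_mul_of_nonneg_left _ (le_of_lt hE)
    have := one_add_le (le_of_lt hs'pos) (le_of_lt hApos) hs2A hM2 t ht
    calc 1 + c ^ 2 * t / (2 * D) = 1 + s' * t := by rw [hs']; ring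
      _ ≤ M * Real.exp (A*t) := this
  · -- supercritical
    set x := Real.sqrt (μ ^ 2 - c ^ 2 / (4 * D ^ 2)) with hx
    have hμgt : c / (2 * D) < μ := by
      rcases lt_trichotomy μ (c / (2*D)) with h | h | h
      · exact absurd h h1
      · exact absurd h h2
      · exact h
    have harg : 0 < μ ^ 2 - c ^ 2 / (4 * D ^ 2) := by
      have h0 : 0 < c/(2*D) := by positivity
      have : (c/(2*D))^2 < μ^2 := by nlinarith
      have e : (c/(2*D))^2 = c^2/(4*D^2) := by field_simp; ring
      linarith [e ▸ this]
    have hxpos : 0 < x := Real.sqrt_pos.mpr harg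
    simp only [Htilde2]
    rw [abs_mul, abs_of_pos hE, ← hexpid]
    apply mul_le_mul_of_nonneg_left _ (le_of_lt hE)
    have habs : |Real.cos (c * t * x) + c / (2 * D * x) * Real.sin (c * t * x)|
        ≤ 1 + s' * t := by
      have h5 : 0 ≤ c * t * x := by positivity
      calc |Real.cos (c * t * x) + c / (2 * D * x) * Real.sin (c * t * x)|
          ≤ |Real.cos (c * t * x)| + |c / (2 * D * x) * Real.sin (c * t * x)| := abs_add_le _ _
        _ ≤ 1 + c / (2 * D * x) * (c * t * x) := by
            apply add_le_add (Real.abs_cos_le_one _)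
            rw [abs_mul, abs_of_nonneg (by positivity : (0:ℝ) ≤ c / (2 * D * x))]
            apply mul_le_mul_of_nonneg_left _ (by positivity)
            calc |Real.sin (c * t * x)| ≤ |c * t * x| := Real.abs_sin_le_abs
              _ = c * t * x := abs_of_nonneg h5
        _ = 1 + s' * t := by
            congr 1
            rw [hs']; field_simp
    calc |Real.cos (c * t * x) + c / (2 * D * x) * Real.sin (c * t * x)|
        ≤ 1 + s' * t := habs
      _ ≤ M * Real.exp (A*t) := one_add_le (le_of_lt hs'pos) (le_of_lt hApos) hs2A hM2 t ht
end Main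


set_option maxHeartbeats 1000000 in
lemma Cl_le {c D δ κ : ℝ} (hc : 0 < c) (hD : 0 < D) (hδ0 : 0 < δ) (hδ : δ < c / (2 * D))
    (hκ : κ = Real.sqrt (1 - 4 * D ^ 2 * δ ^ 2 / c ^ 2))
    (G : MeasureTheory.Measure ℝ) [MeasureTheory.IsFiniteMeasure G]
    (hsupp : G (Set.Icc 0 δ) = 0) (l : ℕ) {t : ℝ} (ht : 0 ≤ t) :
    0 ≤ Cl c D G l 0 0 ∧
    Cl c D G l t t ≤ ((1 + 1/κ)^2 * Real.exp (-(2*D*δ^2*t))) * Cl c D G l 0 0 := by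
  obtain ⟨hκ0, hκ1, hκsq, h4⟩ := kappa_facts hc hD hδ0 hδ hκ
  set K := (1 + 1/κ)^2 * Real.exp (-(2*D*δ^2*t)) with hK
  set bnd := (1 + 1/κ) * Real.exp (-(D*δ^2*t)) with hbnd
  have h1κ : (0:ℝ) < 1 + 1/κ := by positivity
  have hbnd0 : 0 ≤ bnd := by rw [hbnd]; positivity
  have hKval : bnd * bnd = K := by
    rw [hbnd, hK]
    rw [show ((1 + 1/κ) * Real.exp (-(D*δ^2*t))) * ((1 + 1/κ) * Real.exp (-(D*δ^2*t)))
      = (1 + 1/κ)^2 * (Real.exp (-(D*δ^2*t)) * Real.exp (-(D*δ^2*t))) by ring, ← Real.exp_add]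
    congr 2
    ring
  set νm := G.restrict (Set.Ici (0:ℝ)) with hνm
  have hae : ∀ᵐ μ ∂νm, δ < μ := by
    rw [ae_iff]
    have h1 : {μ : ℝ | ¬ δ < μ} = Set.Iic δ := by ext μ; simp [not_lt]
    rw [h1, hνm, MeasureTheory.Measure.restrict_apply measurableSet_Iic]
    have h2 : Set.Iic δ ∩ Set.Ici 0 = Set.Icc 0 δ := by
      ext μ; simp [and_comm]
    rw [h2]; exact hsupp
  obtain ⟨C, hC0, hC⟩ := besselJ_bound hδ0 l
  set B := C^2/δ^2 with hB
  have hB0 : 0 ≤ B := by rw [hB]; positivity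
  have hBint : ∀ μ : ℝ, δ < μ → 0 ≤ besselInt l μ ∧ besselInt l μ ≤ B := by
    intro μ hμ
    have hμ0 : 0 < μ := lt_trans hδ0 hμ
    rw [besselInt, if_neg (ne_of_gt hμ0)]
    constructor
    · exact div_nonneg (sq_nonneg _) (le_of_lt hμ0)
    · have h2 := (hC μ (le_of_lt hμ)).2
      have h3 : besselJ ((l:ℝ)+1/2) μ^2 ≤ C^2/μ := by
        have h5 := pow_le_pow_left₀ (abs_nonneg _) h2 2
        rw [sq_abs] at h5
        calc besselJ ((l:ℝ)+1/2) μ^2 ≤ (C/Real.sqrt μ)^2 := h5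
          _ = C^2/μ := by rw [div_pow, Real.sq_sqrt (le_of_lt hμ0)]
      calc besselJ ((l:ℝ)+1/2) μ^2 / μ ≤ (C^2/μ)/μ := by gcongr
        _ = C^2/μ^2 := by rw [div_div, ← sq]
        _ ≤ C^2/δ^2 := by
            apply div_le_div_of_nonneg_left (by positivity) (by positivity) (by nlinarith)
  have hmeasH : Measurable (fun μ => Htilde c D μ t) := Htilde_measurable c D t
  have hrestr : νm.restrict (Set.Ioi δ) = νm :=
    MeasureTheory.Measure.restrict_eq_self_of_ae_mem (by filter_upwards [hae] with μ h using h)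
  have hcontInt : ContinuousOn (besselInt l) (Set.Ioi δ) := by
    have hν' : (-1:ℝ) < (l:ℝ) + 1/2 := by
      have : (0:ℝ) ≤ l := Nat.cast_nonneg l
      linarith
    have hJ : ContinuousOn (fun μ => besselJ ((l:ℝ)+1/2) μ) (Set.Ioi δ) := fun μ hμ =>
      (besselJ_continuousAt hν' (lt_trans hδ0 hμ)).continuousWithinAt
    apply ContinuousOn.congr ((hJ.pow 2).div continuousOn_id
      (fun μ hμ => ne_of_gt (lt_trans hδ0 hμ)))
    intro μ hμ
    rw [besselInt, if_neg (ne_of_gt (lt_trans hδ0 hμ))]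
    rfl
  have hgaem : AEMeasurable (besselInt l) νm := by
    rw [← hrestr]; exact hcontInt.aemeasurable measurableSet_Ioi
  have hgsm := hgaem.aestronglyMeasurable
  have hg_int : MeasureTheory.Integrable (besselInt l) νm := by
    apply MeasureTheory.Integrable.mono' (MeasureTheory.integrable_const B) hgsm
    filter_upwards [hae] with μ hμ
    rw [Real.norm_eq_abs, abs_of_nonneg (hBint μ hμ).1]
    exact (hBint μ hμ).2
  have hH : ∀ᵐ μ ∂νm, |Htilde c D μ t| ≤ bnd := by
    filter_upwards [hae] with μ hμ
    exact Htilde_abs_le hc hD hδ0 hδ hκ ht hμ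
  have hf_sm : MeasureTheory.AEStronglyMeasurable
      (fun μ => besselInt l μ * Htilde c D μ t * Htilde c D μ t) νm :=
    ((hgaem.mul hmeasH.aemeasurable).mul hmeasH.aemeasurable).aestronglyMeasurable
  have hf_int : MeasureTheory.Integrable
      (fun μ => besselInt l μ * Htilde c D μ t * Htilde c D μ t) νm := by
    apply MeasureTheory.Integrable.mono' (MeasureTheory.integrable_const (B * (bnd * bnd))) hf_sm
    filter_upwards [hae, hH] with μ hμ hHμ
    rw [Real.norm_eq_abs, abs_mul, abs_mul, abs_of_nonneg (hBint μ hμ).1]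
    have hg := (hBint μ hμ).2
    have hg0 := (hBint μ hμ).1
    calc besselInt l μ * |Htilde c D μ t| * |Htilde c D μ t|
        ≤ B * |Htilde c D μ t| * |Htilde c D μ t| :=
          mul_le_mul_of_nonneg_right (mul_le_mul_of_nonneg_right hg (abs_nonneg _)) (abs_nonneg _)
      _ ≤ B * bnd * |Htilde c D μ t| :=
          mul_le_mul_of_nonneg_right (mul_le_mul_of_nonneg_left hHμ hB0) (abs_nonneg _)
      _ ≤ B * bnd * bnd := mul_le_mul_of_nonneg_left hHμ (by positivity)
      _ = B * (bnd * bnd) := by ring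
  have hfg : (fun μ => besselInt l μ * Htilde c D μ t * Htilde c D μ t)
      ≤ᵐ[νm] fun μ => K * besselInt l μ := by
    filter_upwards [hae, hH] with μ hμ hHμ
    have hg0 := (hBint μ hμ).1
    have hHH : Htilde c D μ t * Htilde c D μ t ≤ bnd * bnd := by
      rw [← abs_mul_abs_self]
      exact mul_le_mul hHμ hHμ (abs_nonneg _) hbnd0
    calc besselInt l μ * Htilde c D μ t * Htilde c D μ t
        = besselInt l μ * (Htilde c D μ t * Htilde c D μ t) := by ring
      _ ≤ besselInt l μ * (bnd * bnd) := mul_le_mul_of_nonneg_left hHH hg0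
      _ = K * besselInt l μ := by rw [hKval]; ring
  have hint : (∫ μ, besselInt l μ * Htilde c D μ t * Htilde c D μ t ∂νm)
      ≤ K * ∫ μ, besselInt l μ ∂νm := by
    calc (∫ μ, besselInt l μ * Htilde c D μ t * Htilde c D μ t ∂νm)
        ≤ ∫ μ, K * besselInt l μ ∂νm :=
          MeasureTheory.integral_mono_ae hf_int (hg_int.const_mul K) hfg
      _ = K * ∫ μ, besselInt l μ ∂νm := MeasureTheory.integral_const_mul K _
  have hg0int : 0 ≤ ∫ μ, besselInt l μ ∂νm :=
    MeasureTheory.integral_nonneg_of_ae (by filter_upwards [hae] with μ hμ using (hBint μ hμ).1)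
  have hCl0 : Cl c D G l 0 0 = 2*Real.pi^2 * ∫ μ, besselInt l μ ∂νm := by
    unfold Cl
    simp only [Htilde_zero, mul_one]
    rfl
  have hClt : Cl c D G l t t
      = 2*Real.pi^2 * ∫ μ, besselInt l μ * Htilde c D μ t * Htilde c D μ t ∂νm := rfl
  constructor
  · rw [hCl0]
    have : (0:ℝ) ≤ 2*Real.pi^2 := by positivity
    exact mul_nonneg this hg0int
  · rw [hClt, hCl0]
    calc 2*Real.pi^2 * ∫ μ, besselInt l μ * Htilde c D μ t * Htilde c D μ t ∂νm
        ≤ 2*Real.pi^2 * (K * ∫ μ, besselInt l μ ∂νm) :=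
          mul_le_mul_of_nonneg_left hint (by positivity)
      _ = K * (2*Real.pi^2 * ∫ μ, besselInt l μ ∂νm) := by ring

/-- If `G([0,δ]) = 0` for some `δ ∈ (0, c/(2D))`, with
`κ = √(1 − 4D²δ²/c²)`, then the tail sums of the angular power spectrum decay
exponentially in time:
`Σ_{l≥L}(2l+1)C_l(t,t) ≤ (1+1/κ)²·exp(−2Dδ²t)·Σ_{l≥L}(2l+1)C_l`
(stated in `ℝ≥0∞` so that possibly divergent tails are covered). -/
theorem truncation_tail_exponential_decay
    (c D δ κ : ℝ) (hc : 0 < c) (hD : 0 < D) (hδ0 : 0 < δ) (hδ : δ < c / (2 * D))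
    (hκ : κ = Real.sqrt (1 - 4 * D ^ 2 * δ ^ 2 / c ^ 2))
    (G : MeasureTheory.Measure ℝ) [MeasureTheory.IsFiniteMeasure G]
    (hG0 : G (Set.Iio 0) = 0) (hsupp : G (Set.Icc 0 δ) = 0) :
    ∀ t : ℝ, 0 ≤ t → ∀ L : ℕ,
      ∑' l : ℕ, ENNReal.ofReal ((2 * ((L + l : ℕ) : ℝ) + 1) * Cl c D G (L + l) t t)
        ≤ ENNReal.ofReal ((1 + 1 / κ) ^ 2 * Real.exp (-(2 * D * δ ^ 2 * t))) *
          ∑' l : ℕ, ENNReal.ofReal ((2 * ((L + l : ℕ) : ℝ) + 1) * Cl c D G (L + l) 0 0) := by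
  intro t ht L
  obtain ⟨hκ0, hκ1, hκsq, h4⟩ := kappa_facts hc hD hδ0 hδ hκ
  set K := (1 + 1/κ)^2 * Real.exp (-(2*D*δ^2*t)) with hK
  have hK0 : 0 ≤ K := by rw [hK]; positivity
  have key : ∀ l : ℕ,
      ENNReal.ofReal ((2 * ((L + l : ℕ) : ℝ) + 1) * Cl c D G (L + l) t t)
        ≤ ENNReal.ofReal K * ENNReal.ofReal ((2 * ((L + l : ℕ) : ℝ) + 1) * Cl c D G (L + l) 0 0) := by
    intro l
    obtain ⟨h0, hle⟩ := Cl_le hc hD hδ0 hδ hκ G hsupp (L + l) ht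
    have hcoef : (0:ℝ) ≤ 2 * ((L + l : ℕ) : ℝ) + 1 := by positivity
    have h1 : (2 * ((L + l : ℕ) : ℝ) + 1) * Cl c D G (L + l) t t
        ≤ K * ((2 * ((L + l : ℕ) : ℝ) + 1) * Cl c D G (L + l) 0 0) := by
      calc (2 * ((L + l : ℕ) : ℝ) + 1) * Cl c D G (L + l) t t
          ≤ (2 * ((L + l : ℕ) : ℝ) + 1) * (K * Cl c D G (L + l) 0 0) :=
            mul_le_mul_of_nonneg_left hle hcoef
        _ = K * ((2 * ((L + l : ℕ) : ℝ) + 1) * Cl c D G (L + l) 0 0) := by ring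
    calc ENNReal.ofReal ((2 * ((L + l : ℕ) : ℝ) + 1) * Cl c D G (L + l) t t)
        ≤ ENNReal.ofReal (K * ((2 * ((L + l : ℕ) : ℝ) + 1) * Cl c D G (L + l) 0 0)) :=
          ENNReal.ofReal_le_ofReal h1
      _ = ENNReal.ofReal K * ENNReal.ofReal ((2 * ((L + l : ℕ) : ℝ) + 1) * Cl c D G (L + l) 0 0) :=
          ENNReal.ofReal_mul hK0
  calc ∑' l : ℕ, ENNReal.ofReal ((2 * ((L + l : ℕ) : ℝ) + 1) * Cl c D G (L + l) t t)
      ≤ ∑' l : ℕ, ENNReal.ofReal K *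
          ENNReal.ofReal ((2 * ((L + l : ℕ) : ℝ) + 1) * Cl c D G (L + l) 0 0) :=
        ENNReal.tsum_le_tsum key
    _ = ENNReal.ofReal K *
          ∑' l : ℕ, ENNReal.ofReal ((2 * ((L + l : ℕ) : ℝ) + 1) * Cl c D G (L + l) 0 0) :=
        ENNReal.tsum_mul_left
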